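/- Let p, q ∈ ℂ[x,y], let v ∈ ℂ[p,q] \ {0} with v = v₁⋯v_m where each v_j is prime in ℂ[x,y] and lies in ℂ[p,q]. If ℂ* is the unit group of ℂ[x,y], then every unit of ℂ[x,y][1/v] lies in ℂ(p,q) \ {0}. -/

import Mathlib

open MvPolynomial

noncomputable section

lemma aux_dvd_prod_primes {R : Type*} [CommRing R] [IsDomain R] {P : R → Prop}
    (hmul : ∀ a b, P a → P b → P (a * b))
    (hunit : ∀ u : R, IsUnit u → P u)
    (M : Multiset R) (hM : ∀ r ∈ M, Prime r ∧ P r) :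
    ∀ f, f ∣ M.prod → P f := by
  induction M using Multiset.induction with
  | empty =>
    intro f hf
    exact hunit f (isUnit_of_dvd_one (by simpa using hf))
  | cons r M ih =>
    intro f hf
    obtain ⟨hr, hPr⟩ := hM r (Multiset.mem_cons_self r M)
    rw [Multiset.prod_cons] at hf
    have hM' : ∀ x ∈ M, Prime x ∧ P x := fun x hx => hM x (Multiset.mem_cons_of_mem hx)
    by_cases hrf : r ∣ f
    · obtain ⟨f', rfl⟩ := hrf
      obtain ⟨s, hs⟩ := hf
      have h1 : f' ∣ M.prod := by
        refine ⟨s, mul_left_cancel₀ hr.ne_zero ?_⟩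
        rw [hs]; ring
      exact hmul r f' hPr (ih hM' f' h1)
    · obtain ⟨s, hs⟩ := hf
      have hrdvd : r ∣ f * s := ⟨M.prod, by rw [← hs]⟩
      rcases hr.dvd_mul.mp hrdvd with h | h
      · exact absurd h hrf
      · obtain ⟨s', rfl⟩ := h
        have h1 : f ∣ M.prod := by
          refine ⟨s', mul_left_cancel₀ hr.ne_zero ?_⟩
          rw [hs]; ring
        exact ih hM' f h1

set_option maxHeartbeats 2000000 in
set_option synthInstance.maxHeartbeats 400000 in
theorem units_of_localization_in_Cpq
    (p q : MvPolynomial (Fin 2) ℂ)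
    (m : ℕ) (vf : Fin m → MvPolynomial (Fin 2) ℂ)
    (hprime : ∀ j, Prime (vf j))
    (hmem : ∀ j, vf j ∈ Algebra.adjoin ℂ ({p, q} : Set (MvPolynomial (Fin 2) ℂ)))
    (v : MvPolynomial (Fin 2) ℂ) (hv : v = ∏ j, vf j) (hv0 : v ≠ 0)
    (hunits : ∀ a : MvPolynomial (Fin 2) ℂ, IsUnit a → ∃ c : ℂ, c ≠ 0 ∧ a = C c)
    (B : Subalgebra ℂ (FractionRing (MvPolynomial (Fin 2) ℂ)))
    (hB : B = Algebra.adjoin ℂ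
      ({algebraMap (MvPolynomial (Fin 2) ℂ) (FractionRing (MvPolynomial (Fin 2) ℂ)) (X 0),
        algebraMap (MvPolynomial (Fin 2) ℂ) (FractionRing (MvPolynomial (Fin 2) ℂ)) (X 1),
        (algebraMap (MvPolynomial (Fin 2) ℂ) (FractionRing (MvPolynomial (Fin 2) ℂ)) v)⁻¹} :
        Set (FractionRing (MvPolynomial (Fin 2) ℂ)))) :
    ∀ a ∈ B, (∃ b ∈ B, a * b = 1) →
      a ∈ IntermediateField.adjoin ℂ
          {algebraMap (MvPolynomial (Fin 2) ℂ) (FractionRing (MvPolynomial (Fin 2) ℂ)) p,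
           algebraMap (MvPolynomial (Fin 2) ℂ) (FractionRing (MvPolynomial (Fin 2) ℂ)) q}
        ∧ a ≠ 0 := by
  intro a haB hab
  obtain ⟨b, hbB, hab1⟩ := hab
  set φ := algebraMap (MvPolynomial (Fin 2) ℂ) (FractionRing (MvPolynomial (Fin 2) ℂ)) with hφ
  have hinj : Function.Injective φ :=
    IsFractionRing.injective (MvPolynomial (Fin 2) ℂ) (FractionRing (MvPolynomial (Fin 2) ℂ))
  have hφv0 : φ v ≠ 0 := fun h => hv0 (hinj (by simpa using h))
  set F := IntermediateField.adjoin ℂ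
      ({φ p, φ q} : Set (FractionRing (MvPolynomial (Fin 2) ℂ))) with hF
  have hA : ∀ r : MvPolynomial (Fin 2) ℂ,
      r ∈ Algebra.adjoin ℂ ({p, q} : Set (MvPolynomial (Fin 2) ℂ)) → φ r ∈ F := by
    intro r hr
    have hle : Algebra.adjoin ℂ ({p, q} : Set (MvPolynomial (Fin 2) ℂ)) ≤
        Subalgebra.comap
          (IsScalarTower.toAlgHom ℂ (MvPolynomial (Fin 2) ℂ)
            (FractionRing (MvPolynomial (Fin 2) ℂ))) F.toSubalgebra := by
      apply Algebra.adjoin_le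
      rintro x (rfl | rfl)
      · exact IntermediateField.subset_adjoin ℂ _ (Or.inl rfl)
      · exact IntermediateField.subset_adjoin ℂ _ (Or.inr rfl)
    exact hle hr
  have hconst : ∀ c : ℂ, φ (C c) = algebraMap ℂ (FractionRing (MvPolynomial (Fin 2) ℂ)) c := by
    intro c
    rw [hφ, ← MvPolynomial.algebraMap_eq,
      ← IsScalarTower.algebraMap_apply ℂ (MvPolynomial (Fin 2) ℂ)
        (FractionRing (MvPolynomial (Fin 2) ℂ))]
  have hrep : ∀ x ∈ B, ∃ (f : MvPolynomial (Fin 2) ℂ) (n : ℕ), x = φ f * (φ v)⁻¹ ^ n := by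
    rw [hB]
    intro x hx
    induction hx using Algebra.adjoin_induction with
    | mem y hy =>
      rcases hy with rfl | rfl | rfl
      · exact ⟨X 0, 0, by simp⟩
      · exact ⟨X 1, 0, by simp⟩
      · exact ⟨1, 1, by simp⟩
    | algebraMap c =>
      exact ⟨C c, 0, by rw [hconst c, pow_zero, mul_one]⟩
    | add x y hx hy ihx ihy =>
      obtain ⟨f, n, rfl⟩ := ihx
      obtain ⟨g, k, rfl⟩ := ihy
      refine ⟨f * v ^ k + g * v ^ n, n + k, ?_⟩
      rw [map_add, map_mul, map_mul, map_pow, map_pow]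
      have hk : φ v ^ k * (φ v)⁻¹ ^ k = 1 := by rw [← mul_pow, mul_inv_cancel₀ hφv0, one_pow]
      have hn : φ v ^ n * (φ v)⁻¹ ^ n = 1 := by rw [← mul_pow, mul_inv_cancel₀ hφv0, one_pow]
      field_simp
      linear_combination (-(φ f * (φ v)⁻¹ ^ n)) * hk - (φ g * (φ v)⁻¹ ^ k) * hn
      try ring
      try exact Or.inl trivial
    | mul x y hx hy ihx ihy =>
      obtain ⟨f, n, rfl⟩ := ihx
      obtain ⟨g, k, rfl⟩ := ihy
      refine ⟨f * g, n + k, ?_⟩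
      rw [map_mul]
      field_simp
      try ring
      try exact Or.inl trivial
  obtain ⟨f, n, rfl⟩ := hrep a haB
  obtain ⟨g, k, rfl⟩ := hrep b hbB
  have key : f * g = v ^ (n + k) := by
    apply hinj
    rw [map_mul, map_pow]
    have h1 : φ f * φ g * ((φ v)⁻¹) ^ (n + k) = 1 := by
      rw [← hab1]; ring
    field_simp at h1
    have hvv : φ v ^ (n + k) * (φ v)⁻¹ ^ (n + k) = 1 := by
      rw [← mul_pow, mul_inv_cancel₀ hφv0, one_pow]
    linear_combination (φ v ^ (n + k)) * h1 - (φ f * φ g) * hvv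
  set M : Multiset (MvPolynomial (Fin 2) ℂ) := (n + k) • (Finset.univ.val.map vf) with hM
  have hMprod : M.prod = v ^ (n + k) := by
    rw [hM, Multiset.prod_nsmul, hv]
    rfl
  have hfd : f ∣ M.prod := ⟨g, by rw [hMprod, ← key]⟩
  have hPf : φ f ∈ F := by
    refine aux_dvd_prod_primes (P := fun r => φ r ∈ F)
      (fun a b ha hb => by show φ (a * b) ∈ F; rw [map_mul]; exact mul_mem ha hb)
      (fun u hu => ?_) M (fun r hr => ?_) f hfd
    · obtain ⟨c, hc0, rfl⟩ := hunits u hu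
      rw [hconst c]
      exact F.algebraMap_mem c
    · obtain ⟨j, _, rfl⟩ := Multiset.mem_map.mp (Multiset.mem_of_mem_nsmul hr)
      exact ⟨hprime j, hA _ (hmem j)⟩
  have hφvF : φ v ∈ F := by
    refine hA v ?_
    rw [hv]
    exact prod_mem (fun j _ => hmem j)
  have ha0 : φ f * (φ v)⁻¹ ^ n ≠ 0 := left_ne_zero_of_mul_eq_one hab1
  exact ⟨mul_mem hPf (pow_mem (F.inv_mem hφvF) n), ha0⟩
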